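/- Let (a_1,...,a_r,b_1,...,b_s) and (c_1,...,c_r,d_1,...,d_s) be tuples of complex numbers. Then every supersymmetric polynomial p in r + s variables takes the same value on both tuples if and only if the equality ∏_{i=1}^r (1 + a_i z) / ∏_{j=1}^s (1 − b_j z) = ∏_{i=1}^r (1 + c_i z) / ∏_{j=1}^s (1 − d_j z) holds as rational functions in z. -/

import Mathlib

open Polynomial in
lemma aux_moments_eq {M N : Multiset ℂ}
    (h : ∀ k : ℕ, (M.map (· ^ k)).sum = (N.map (· ^ k)).sum) (f : Polynomial ℂ) :
    (M.map fun x => f.eval x).sum = (N.map fun x => f.eval x).sum := by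
  induction f using Polynomial.induction_on' with
  | add p q hp hq =>
      simp only [eval_add]
      rw [Multiset.sum_map_add, Multiset.sum_map_add, hp, hq]
  | monomial n c =>
      simp only [eval_monomial]
      rw [Multiset.sum_map_mul_left, Multiset.sum_map_mul_left, h n]

open Polynomial in
lemma aux_multiset_eq_of_psum_eq {M N : Multiset ℂ}
    (h : ∀ k : ℕ, (M.map (· ^ k)).sum = (N.map (· ^ k)).sum) : M = N := by
  ext x₀
  set S : Finset ℂ := (M + N).toFinset with hS
  by_cases hx₀ : x₀ ∈ S
  · set L : Polynomial ℂ := ∏ x ∈ S.erase x₀, (X - C x) with hL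
    have hLroot : ∀ z ∈ S.erase x₀, L.eval z = 0 := by
      intro z hz
      rw [hL, eval_prod]
      exact Finset.prod_eq_zero hz (by simp)
    have hLne : L.eval x₀ ≠ 0 := by
      rw [hL, eval_prod]
      rw [Finset.prod_ne_zero_iff]
      intro z hz
      have : z ≠ x₀ := Finset.ne_of_mem_erase hz
      simpa [sub_ne_zero] using fun h => this h.symm
    have key : ∀ P : Multiset ℂ, P ≤ M + N →
        (P.map fun x => L.eval x).sum = (P.count x₀ : ℂ) * L.eval x₀ := by
      intro P hP
      rw [Finset.sum_multiset_map_count]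
      rw [Finset.sum_eq_single x₀]
      · simp [nsmul_eq_mul]
      · intro z hz hzne
        have hzS : z ∈ S := by
          rw [hS, Multiset.mem_toFinset]
          exact Multiset.mem_of_le hP (Multiset.mem_toFinset.mp hz)
        rw [hLroot z (Finset.mem_erase.mpr ⟨hzne, hzS⟩)]
        simp
      · intro hx
        simp [Multiset.count_eq_zero_of_notMem (fun hm => hx (Multiset.mem_toFinset.mpr hm))]
    have h1 := key M (Multiset.le_add_right M N)
    have h2 := key N (Multiset.le_add_left N M)
    have := aux_moments_eq h L
    rw [h1, h2] at this
    have := mul_right_cancel₀ hLne this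
    exact_mod_cast this
  · have hM : x₀ ∉ M := fun hm => hx₀ (by rw [hS, Multiset.mem_toFinset]; exact Multiset.mem_add.mpr (Or.inl hm))
    have hN : x₀ ∉ N := fun hm => hx₀ (by rw [hS, Multiset.mem_toFinset]; exact Multiset.mem_add.mpr (Or.inr hm))
    rw [Multiset.count_eq_zero_of_notMem hM, Multiset.count_eq_zero_of_notMem hN]


open Polynomial in
lemma aux_multiset_eq_of_prod_eq {M N : Multiset ℂ}
    (hcard : Multiset.card M = Multiset.card N)
    (h : (M.map fun x => 1 + C x * X).prod = (N.map fun x => 1 + C x * X).prod) :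
    M = N := by
  classical
  have split : ∀ P : Multiset ℂ,
      (P.map fun x => 1 + C x * X).prod = ((P.filter (· ≠ 0)).map fun x => 1 + C x * X).prod := by
    intro P
    conv_lhs => rw [← Multiset.filter_add_not (· ≠ 0) P]
    rw [Multiset.map_add, Multiset.prod_add]
    have h1 : ∀ x ∈ P.filter (fun x => ¬ x ≠ 0), (1 + C x * X) = 1 := by
      intro x hx
      have : x = 0 := by simpa using (Multiset.mem_filter.mp hx).2
      simp [this]
    rw [Multiset.map_congr rfl h1]
    simp
  have hfac : ∀ P₀ : Multiset ℂ, (∀ x ∈ P₀, x ≠ 0) →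
      (P₀.map fun x => 1 + C x * X).prod
        = C P₀.prod * ((P₀.map fun x => -x⁻¹).map fun a => X - C a).prod := by
    intro P₀ hP₀
    have h1 : ∀ x ∈ P₀, (1 + C x * X) = C x * (X - C (-x⁻¹)) := by
      intro x hx
      rw [mul_sub, ← C_mul, mul_neg, mul_inv_cancel₀ (hP₀ x hx), map_neg, map_one]
      ring
    rw [Multiset.map_congr rfl h1, Multiset.prod_map_mul, Multiset.map_map]
    congr 1
    exact (map_multiset_prod (C : ℂ →+* ℂ[X]) P₀).symm
  set M₀ := M.filter (· ≠ 0) with hM₀def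
  set N₀ := N.filter (· ≠ 0) with hN₀def
  have hM₀ : ∀ x ∈ M₀, x ≠ 0 := fun x hx => (Multiset.mem_filter.mp hx).2
  have hN₀ : ∀ x ∈ N₀, x ≠ 0 := fun x hx => (Multiset.mem_filter.mp hx).2
  have hMprod : M₀.prod ≠ 0 := Multiset.prod_ne_zero (fun h0 => hM₀ 0 h0 rfl)
  have hNprod : N₀.prod ≠ 0 := Multiset.prod_ne_zero (fun h0 => hN₀ 0 h0 rfl)
  rw [split M, split N, hfac M₀ hM₀, hfac N₀ hN₀] at h
  have hroots := congrArg Polynomial.roots h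
  rw [Polynomial.roots_C_mul _ hMprod, Polynomial.roots_C_mul _ hNprod,
    Polynomial.roots_multiset_prod_X_sub_C, Polynomial.roots_multiset_prod_X_sub_C] at hroots
  have hinj : Function.Injective (fun x : ℂ => -x⁻¹) :=
    neg_injective.comp inv_injective
  have h₀ : M₀ = N₀ := Multiset.map_injective hinj hroots
  have hcard₀ : Multiset.card M₀ = Multiset.card N₀ := by rw [h₀]
  -- zero parts
  have hMsplit := Multiset.filter_add_not (· ≠ 0) M
  have hNsplit := Multiset.filter_add_not (· ≠ 0) N
  have hzM : M.filter (fun x => ¬ x ≠ 0)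
      = Multiset.replicate (Multiset.card (M.filter (fun x => ¬ x ≠ 0))) 0 :=
    (Multiset.eq_replicate_card).mpr (fun b hb => by simpa using (Multiset.mem_filter.mp hb).2)
  have hzN : N.filter (fun x => ¬ x ≠ 0)
      = Multiset.replicate (Multiset.card (N.filter (fun x => ¬ x ≠ 0))) 0 :=
    (Multiset.eq_replicate_card).mpr (fun b hb => by simpa using (Multiset.mem_filter.mp hb).2)
  have hcz : Multiset.card (M.filter (fun x => ¬ x ≠ 0))
      = Multiset.card (N.filter (fun x => ¬ x ≠ 0)) := by
    have cM := congrArg Multiset.card hMsplit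
    have cN := congrArg Multiset.card hNsplit
    rw [Multiset.card_add] at cM cN
    have hc2 : Multiset.card (M.filter (fun x => x ≠ 0)) = Multiset.card (N.filter (fun x => x ≠ 0)) := by
      rw [← hM₀def, ← hN₀def, h₀]
    omega
  rw [← hMsplit, ← hNsplit, ← hM₀def, ← hN₀def, h₀, hzM, hzN, hcz]

open MvPolynomial

/-- The substitution `x_r ↦ t`, `y_1 ↦ −t` (leaving all other variables fixed), on polynomials
in variables `x_1, …, x_{r+1}, y_1, …, y_{s+1}` (the `x`'s indexed by `Fin (r+1)` via `Sum.inl`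
and the `y`'s indexed by `Fin (s+1)` via `Sum.inr`). -/
noncomputable def cancelSub (r s : ℕ) (t : ℂ) :
    MvPolynomial (Fin (r + 1) ⊕ Fin (s + 1)) ℂ →ₐ[ℂ]
      MvPolynomial (Fin (r + 1) ⊕ Fin (s + 1)) ℂ :=
  MvPolynomial.aeval fun i =>
    if i = Sum.inl (Fin.last r) then MvPolynomial.C t
    else if i = Sum.inr 0 then MvPolynomial.C (-t)
    else MvPolynomial.X i

/-- A polynomial in `x_1, …, x_{r+1}, y_1, …, y_{s+1}` is supersymmetric if it is symmetric
in the `x`-variables, symmetric in the `y`-variables, and the substitution of the last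
`x`-variable by `t` and the first `y`-variable by `−t` yields a result independent of `t`. -/
def IsSupersymmetric (r s : ℕ) (p : MvPolynomial (Fin (r + 1) ⊕ Fin (s + 1)) ℂ) : Prop :=
  (∀ σ : Equiv.Perm (Fin (r + 1)),
      MvPolynomial.rename (Sum.map (σ : Fin (r + 1) → Fin (r + 1)) id) p = p) ∧
  (∀ τ : Equiv.Perm (Fin (s + 1)),
      MvPolynomial.rename (Sum.map id (τ : Fin (s + 1) → Fin (s + 1))) p = p) ∧
  (∀ t t' : ℂ, cancelSub r s t p = cancelSub r s t' p)

/-- The `k`-th power sum supersymmetric polynomial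
`p_k = x_1^k + ⋯ + x_{r+1}^k + (−1)^{k+1} (y_1^k + ⋯ + y_{s+1}^k)`. -/
noncomputable def powerSumSupersym (r s : ℕ) (k : ℕ) :
    MvPolynomial (Fin (r + 1) ⊕ Fin (s + 1)) ℂ :=
  (∑ i : Fin (r + 1), MvPolynomial.X (Sum.inl i) ^ k) +
    (-1 : MvPolynomial (Fin (r + 1) ⊕ Fin (s + 1)) ℂ) ^ (k + 1) *
      ∑ j : Fin (s + 1), MvPolynomial.X (Sum.inr j) ^ k

lemma aux_map_univ_eq_ofFn {α : Type*} {n : ℕ} (f : Fin n → α) :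
    Multiset.map f Finset.univ.val = ↑(List.ofFn f) := by
  rw [List.ofFn_eq_map]
  rfl

lemma aux_exists_comp_perm {α : Type*} {n : ℕ} (f g : Fin n → α)
    (h : Multiset.map f Finset.univ.val = Multiset.map g Finset.univ.val) :
    ∃ σ : Equiv.Perm (Fin n), f ∘ σ = g := by
  classical
  letI : LinearOrder α := linearOrderOfSTO WellOrderingRel
  haveI : IsAntisymm α (· ≤ ·) := ⟨fun _ _ => le_antisymm⟩
  rw [aux_map_univ_eq_ofFn, aux_map_univ_eq_ofFn, Multiset.coe_eq_coe] at h
  have hs : List.ofFn (f ∘ Tuple.sort f) = List.ofFn (g ∘ Tuple.sort g) := by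
    refine (fun hp h1 h2 => List.Perm.eq_of_pairwise' (r := (· ≤ ·)) h1 h2 hp) ?_ ?_ ?_
    · exact ((Equiv.Perm.ofFn_comp_perm _ f).trans h).trans
        (Equiv.Perm.ofFn_comp_perm _ g).symm
    · exact (List.sortedLE_ofFn_iff.2 (Tuple.monotone_sort f)).pairwise
    · exact (List.sortedLE_ofFn_iff.2 (Tuple.monotone_sort g)).pairwise
  have hfg : f ∘ Tuple.sort f = g ∘ Tuple.sort g := List.ofFn_inj.mp hs
  refine ⟨((Tuple.sort g)⁻¹ : Equiv.Perm (Fin n)).trans (Tuple.sort f), ?_⟩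
  funext i
  have := congrFun hfg ((Tuple.sort g)⁻¹ i)
  simpa using this

-- evaluation of cancelSub
lemma aux_eval_cancelSub (r s : ℕ) (t : ℂ) (a : Fin (r + 1) → ℂ) (b : Fin (s + 1) → ℂ)
    (p : MvPolynomial (Fin (r + 1) ⊕ Fin (s + 1)) ℂ) :
    MvPolynomial.eval (Sum.elim a b) (cancelSub r s t p) =
      MvPolynomial.eval (Sum.elim (Function.update a (Fin.last r) t)
        (Function.update b 0 (-t))) p := by
  show MvPolynomial.eval (Sum.elim a b) (MvPolynomial.aeval _ p) = _
  rw [MvPolynomial.aeval_def, MvPolynomial.algebraMap_eq, ← MvPolynomial.eval_assoc]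
  refine congrArg (fun g => MvPolynomial.eval g p) ?_
  funext i
  rcases i with i | j
  · by_cases hi : i = Fin.last r
    · subst hi; simp [Function.comp]
    · simp [Function.comp, hi, Function.update_of_ne hi]
  · by_cases hj : j = 0
    · subst hj; simp [Function.comp]
    · simp [Function.comp, hj, Function.update_of_ne hj]

lemma aux_powerSum_supersym (r s k : ℕ) : IsSupersymmetric r s (powerSumSupersym r s k) := by
  refine ⟨?_, ?_, ?_⟩
  · intro σ
    simp only [powerSumSupersym, map_add, map_mul, map_pow, map_sum, map_neg, map_one,
      MvPolynomial.rename_X, Sum.map_inl, Sum.map_inr, id_eq]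
    congr 1
    exact Equiv.sum_comp σ (fun i => MvPolynomial.X (Sum.inl i) ^ k)
  · intro τ
    simp only [powerSumSupersym, map_add, map_mul, map_pow, map_sum, map_neg, map_one,
      MvPolynomial.rename_X, Sum.map_inl, Sum.map_inr, id_eq]
    congr 1
    exact congrArg _ (Equiv.sum_comp τ (fun j => MvPolynomial.X (Sum.inr j) ^ k))
  · intro t t'
    have key : ∀ u : ℂ, cancelSub r s u (powerSumSupersym r s k) =
        (∑ i : Fin r, MvPolynomial.X (Sum.inl (Fin.castSucc i)) ^ k) +
          (-1 : MvPolynomial (Fin (r + 1) ⊕ Fin (s + 1)) ℂ) ^ (k + 1) *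
            ∑ j : Fin s, MvPolynomial.X (Sum.inr j.succ) ^ k := by
      intro u
      simp only [powerSumSupersym, map_add, map_mul, map_pow, map_sum, map_neg, map_one]
      rw [Fin.sum_univ_castSucc (f := fun i => cancelSub r s u (MvPolynomial.X (Sum.inl i)) ^ k)]
      rw [Fin.sum_univ_succ (f := fun j => cancelSub r s u (MvPolynomial.X (Sum.inr j)) ^ k)]
      have h1 : ∀ i : Fin r, cancelSub r s u (MvPolynomial.X (Sum.inl (Fin.castSucc i)))
          = MvPolynomial.X (Sum.inl (Fin.castSucc i)) := by
        intro i
        rw [cancelSub, MvPolynomial.aeval_X]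
        have : (Fin.castSucc i) ≠ Fin.last r := Fin.ne_of_lt (Fin.castSucc_lt_last i)
        simp [this]
      have h2 : ∀ j : Fin s, cancelSub r s u (MvPolynomial.X (Sum.inr j.succ))
          = MvPolynomial.X (Sum.inr j.succ) := by
        intro j
        rw [cancelSub, MvPolynomial.aeval_X]
        have : (j.succ : Fin (s+1)) ≠ 0 := Fin.succ_ne_zero j
        simp [this]
      have h3 : cancelSub r s u (MvPolynomial.X (Sum.inl (Fin.last r))) = MvPolynomial.C u := by
        rw [cancelSub, MvPolynomial.aeval_X]; simp
      have h4 : cancelSub r s u (MvPolynomial.X (Sum.inr 0)) = MvPolynomial.C (-u) := by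
        rw [cancelSub, MvPolynomial.aeval_X]; simp
      simp only [h1, h2, h3, h4]
      have hcancel : (MvPolynomial.C u : MvPolynomial (Fin (r + 1) ⊕ Fin (s + 1)) ℂ) ^ k
          + (-1 : MvPolynomial (Fin (r + 1) ⊕ Fin (s + 1)) ℂ) ^ (k + 1) * (MvPolynomial.C (-u)) ^ k = 0 := by
        rw [map_neg]
        have hnp : (-MvPolynomial.C u : MvPolynomial (Fin (r + 1) ⊕ Fin (s + 1)) ℂ) ^ k
            = (-1) ^ k * (MvPolynomial.C u) ^ k := neg_pow _ _
        rw [hnp, ← mul_assoc, ← pow_add,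
          Odd.neg_one_pow (n := k + 1 + k) ⟨k, by ring⟩]
        ring
      linear_combination hcancel
    rw [key t, key t']

lemma aux_eval_powerSum (r s k : ℕ) (a : Fin (r + 1) → ℂ) (b : Fin (s + 1) → ℂ) :
    MvPolynomial.eval (Sum.elim a b) (powerSumSupersym r s k) =
      (∑ i : Fin (r + 1), a i ^ k) + (-1 : ℂ) ^ (k + 1) * ∑ j : Fin (s + 1), b j ^ k := by
  simp [powerSumSupersym]

lemma aux_eval_perm {r s : ℕ} {p : MvPolynomial (Fin (r + 1) ⊕ Fin (s + 1)) ℂ}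
    (hp : IsSupersymmetric r s p) (a : Fin (r + 1) → ℂ) (b : Fin (s + 1) → ℂ)
    (σ : Equiv.Perm (Fin (r + 1))) (τ : Equiv.Perm (Fin (s + 1))) :
    MvPolynomial.eval (Sum.elim (a ∘ σ) (b ∘ τ)) p = MvPolynomial.eval (Sum.elim a b) p := by
  conv_rhs => rw [← hp.1 σ, ← hp.2.1 τ, MvPolynomial.eval_rename, MvPolynomial.eval_rename]
  refine congrArg (fun g => MvPolynomial.eval g p) ?_
  funext i
  rcases i with i | j <;> simp

lemma aux_eval_cancel_move {r s : ℕ} {p : MvPolynomial (Fin (r + 1) ⊕ Fin (s + 1)) ℂ}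
    (hp : IsSupersymmetric r s p) (a : Fin (r + 1) → ℂ) (b : Fin (s + 1) → ℂ)
    {x : ℂ} (ha : a (Fin.last r) = x) (hb : b 0 = -x) (y : ℂ) :
    MvPolynomial.eval (Sum.elim a b) p =
      MvPolynomial.eval (Sum.elim (Function.update a (Fin.last r) y)
        (Function.update b 0 (-y))) p := by
  have h1 := aux_eval_cancelSub r s x a b p
  have h2 := aux_eval_cancelSub r s y a b p
  rw [hp.2.2 x y] at h1
  rw [h2] at h1
  rw [← h1.symm]
  refine congrArg (fun g => MvPolynomial.eval g p) ?_
  funext i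
  rcases i with i | j
  · by_cases hi : i = Fin.last r
    · subst hi; simp [ha]
    · simp [Function.update_of_ne hi]
  · by_cases hj : j = 0
    · subst hj; simp [hb]
    · simp [Function.update_of_ne hj]

lemma aux_map_univ_cons {α ι : Type*} [Fintype ι] [DecidableEq ι] (f : ι → α) (i : ι) :
    Multiset.map f Finset.univ.val = f i ::ₘ Multiset.map f (Finset.univ.val.erase i) := by
  conv_lhs => rw [← Multiset.cons_erase (Finset.mem_val.mpr (Finset.mem_univ i))]
  rw [Multiset.map_cons]

lemma aux_map_update {α ι : Type*} [Fintype ι] [DecidableEq ι] (f : ι → α) (i : ι) (y : α) :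
    Multiset.map (Function.update f i y) Finset.univ.val
      = y ::ₘ Multiset.map f (Finset.univ.val.erase i) := by
  rw [aux_map_univ_cons (Function.update f i y) i, Function.update_self]
  congr 1
  refine Multiset.map_congr rfl ?_
  intro z hz
  have hzne : z ≠ i := ((Multiset.Nodup.mem_erase_iff Finset.univ.nodup).mp hz).1
  rw [Function.update_of_ne hzne]

lemma aux_reach {r s : ℕ} {p : MvPolynomial (Fin (r + 1) ⊕ Fin (s + 1)) ℂ}
    (hp : IsSupersymmetric r s p) (c : Fin (r + 1) → ℂ) (d : Fin (s + 1) → ℂ) :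
    ∀ n : ℕ, ∀ (a : Fin (r + 1) → ℂ) (b : Fin (s + 1) → ℂ),
      Multiset.card (Multiset.map a Finset.univ.val - Multiset.map c Finset.univ.val) = n →
      Multiset.map a Finset.univ.val + Multiset.map (fun j => -(d j)) Finset.univ.val =
        Multiset.map c Finset.univ.val + Multiset.map (fun j => -(b j)) Finset.univ.val →
      MvPolynomial.eval (Sum.elim a b) p = MvPolynomial.eval (Sum.elim c d) p := by
  intro n
  induction n using Nat.strong_induction_on with
  | _ n ih =>
    intro a b hn hinv
    by_cases heq : Multiset.map a Finset.univ.val = Multiset.map c Finset.univ.val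
    · -- base case: equal multisets of x-values and of y-values
      rw [heq, add_right_inj] at hinv
      obtain ⟨σ, hσ⟩ := aux_exists_comp_perm c a heq.symm
      obtain ⟨τ, hτ⟩ := aux_exists_comp_perm (fun j => -(d j)) (fun j => -(b j)) hinv
      have hdτ : d ∘ τ = b := funext fun j => neg_injective (congrFun hτ j)
      rw [← hσ, ← hdτ]
      exact aux_eval_perm hp c d σ τ
    · -- inductive step
      have hcardA : Multiset.card (Multiset.map a Finset.univ.val)
          = Multiset.card (Multiset.map c Finset.univ.val) := by
        rw [Multiset.card_map, Multiset.card_map]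
      -- find x overrepresented in a, y overrepresented in c
      have hnotle : ¬ Multiset.map a Finset.univ.val ≤ Multiset.map c Finset.univ.val := by
        intro hle
        exact heq (Multiset.eq_of_le_of_card_le hle hcardA.ge)
      have hnotge : ¬ Multiset.map c Finset.univ.val ≤ Multiset.map a Finset.univ.val := by
        intro hle
        exact heq (Multiset.eq_of_le_of_card_le hle hcardA.le).symm
      obtain ⟨x, hx⟩ : ∃ x, Multiset.count x (Multiset.map c Finset.univ.val)
          < Multiset.count x (Multiset.map a Finset.univ.val) := by
        by_contra hcon
        push_neg at hcon
        exact hnotle (Multiset.le_iff_count.mpr fun z => by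
          have := hcon z; omega)
      obtain ⟨y, hy⟩ : ∃ y, Multiset.count y (Multiset.map a Finset.univ.val)
          < Multiset.count y (Multiset.map c Finset.univ.val) := by
        by_contra hcon
        push_neg at hcon
        exact hnotge (Multiset.le_iff_count.mpr fun z => by
          have := hcon z; omega)
      have hxy : x ≠ y := by rintro rfl; omega
      -- x occurs in a and in -b
      have hxA : x ∈ Multiset.map a Finset.univ.val := by
        rw [← Multiset.count_pos]; omega
      have hxB : x ∈ Multiset.map (fun j => -(b j)) Finset.univ.val := by
        have hcount := congrArg (Multiset.count x) hinv
        rw [Multiset.count_add, Multiset.count_add] at hcount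
        rw [← Multiset.count_pos]; omega
      obtain ⟨i, -, hai⟩ := Multiset.mem_map.mp hxA
      obtain ⟨j, -, hbj⟩ := Multiset.mem_map.mp hxB
      -- move x into the last x-slot and first y-slot
      set σ : Equiv.Perm (Fin (r + 1)) := Equiv.swap i (Fin.last r) with hσdef
      set τ : Equiv.Perm (Fin (s + 1)) := Equiv.swap j 0 with hτdef
      set a' : Fin (r + 1) → ℂ := a ∘ σ with ha'def
      set b' : Fin (s + 1) → ℂ := b ∘ τ with hb'def
      have ha' : a' (Fin.last r) = x := by
        rw [ha'def]; simp [hσdef, Equiv.swap_apply_right, hai]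
      have hb' : b' 0 = -x := by
        rw [hb'def]
        simp only [Function.comp_apply, hτdef, Equiv.swap_apply_right]
        exact neg_eq_iff_eq_neg.mp hbj
      have hA' : Multiset.map a' Finset.univ.val = Multiset.map a Finset.univ.val := by
        rw [ha'def, ← Multiset.map_map, Multiset.map_univ_val_equiv]
      have hB' : Multiset.map (fun j => -(b' j)) Finset.univ.val
          = Multiset.map (fun j => -(b j)) Finset.univ.val := by
        have : (fun j => -(b' j)) = (fun j => -(b j)) ∘ τ := by
          funext j; simp [hb'def]
        rw [this, ← Multiset.map_map, Multiset.map_univ_val_equiv]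
      set R : Multiset ℂ := Multiset.map a' (Finset.univ.val.erase (Fin.last r)) with hRdef
      set S : Multiset ℂ := Multiset.map (fun j => -(b' j))
        (Finset.univ.val.erase (0 : Fin (s + 1))) with hSdef
      have hAxR : Multiset.map a Finset.univ.val = x ::ₘ R := by
        rw [← hA', aux_map_univ_cons a' (Fin.last r), ha', hRdef]
      have hBxS : Multiset.map (fun j => -(b j)) Finset.univ.val = x ::ₘ S := by
        rw [← hB', aux_map_univ_cons (fun j => -(b' j)) (0 : Fin (s + 1)), hb', neg_neg, hSdef]
      set a₂ : Fin (r + 1) → ℂ := Function.update a' (Fin.last r) y with ha₂def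
      set b₂ : Fin (s + 1) → ℂ := Function.update b' 0 (-y) with hb₂def
      have hA₂ : Multiset.map a₂ Finset.univ.val = y ::ₘ R := by
        rw [ha₂def, aux_map_update, hRdef]
      have hB₂ : Multiset.map (fun j => -(b₂ j)) Finset.univ.val = y ::ₘ S := by
        have hupd : (fun j => -(b₂ j)) = Function.update (fun j => -(b' j)) 0 y := by
          funext z
          by_cases hz : z = 0
          · subst hz; rw [hb₂def]; simp
          · rw [hb₂def, Function.update_of_ne hz, Function.update_of_ne hz]
        rw [hupd, aux_map_update, hSdef]
      -- new invariant
      have hRD : R + Multiset.map (fun j => -(d j)) Finset.univ.val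
          = Multiset.map c Finset.univ.val + S := by
        have h5 : x ::ₘ (R + Multiset.map (fun j => -(d j)) Finset.univ.val)
            = x ::ₘ (Multiset.map c Finset.univ.val + S) := by
          rw [← Multiset.cons_add, ← hAxR, hinv, hBxS,
            add_comm (Multiset.map c Finset.univ.val) (x ::ₘ S),
            Multiset.cons_add, add_comm S (Multiset.map c Finset.univ.val)]
        exact (Multiset.cons_inj_right x).mp h5
      have hinv₂ : Multiset.map a₂ Finset.univ.val
            + Multiset.map (fun j => -(d j)) Finset.univ.val
          = Multiset.map c Finset.univ.val
            + Multiset.map (fun j => -(b₂ j)) Finset.univ.val := by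
        rw [hA₂, hB₂, Multiset.cons_add, hRD, add_comm (Multiset.map c Finset.univ.val) (y ::ₘ S),
          Multiset.cons_add, add_comm S (Multiset.map c Finset.univ.val)]
      -- the measure decreases
      have hcount_xR : Multiset.count x (Multiset.map c Finset.univ.val) ≤ Multiset.count x R := by
        have := congrArg (Multiset.count x) hAxR
        rw [Multiset.count_cons_self] at this
        omega
      have hcount_yR : Multiset.count y R + 1 ≤ Multiset.count y (Multiset.map c Finset.univ.val) := by
        have := congrArg (Multiset.count y) hAxR
        rw [Multiset.count_cons_of_ne (Ne.symm hxy)] at this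
        omega
      have hsub : Multiset.map a₂ Finset.univ.val - Multiset.map c Finset.univ.val
          = (Multiset.map a Finset.univ.val - Multiset.map c Finset.univ.val).erase x := by
        rw [hA₂, hAxR]
        ext z
        by_cases hz : z = x
        · subst hz
          rw [Multiset.count_erase_self, Multiset.count_sub, Multiset.count_sub,
            Multiset.count_cons_self, Multiset.count_cons_of_ne hxy]
          omega
        · rw [Multiset.count_erase_of_ne hz, Multiset.count_sub, Multiset.count_sub,
            Multiset.count_cons_of_ne hz]
          by_cases hzy : z = y
          · subst hzy
            rw [Multiset.count_cons_self]
            omega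
          · rw [Multiset.count_cons_of_ne hzy]
      have hxmem : x ∈ Multiset.map a Finset.univ.val - Multiset.map c Finset.univ.val := by
        rw [← Multiset.count_pos, Multiset.count_sub]
        omega
      have hlt : Multiset.card (Multiset.map a₂ Finset.univ.val
          - Multiset.map c Finset.univ.val) < n := by
        rw [hsub, Multiset.card_erase_of_mem hxmem, hn, Nat.pred_eq_sub_one]
        have hpos : 0 < n := hn ▸ Multiset.card_pos_iff_exists_mem.mpr ⟨x, hxmem⟩
        omega
      -- chain of equalities
      have e1 : MvPolynomial.eval (Sum.elim a b) p = MvPolynomial.eval (Sum.elim a' b') p :=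
        (aux_eval_perm hp a b σ τ).symm
      have e2 : MvPolynomial.eval (Sum.elim a' b') p = MvPolynomial.eval (Sum.elim a₂ b₂) p :=
        aux_eval_cancel_move hp a' b' ha' hb' y
      have e3 := ih _ hlt a₂ b₂ rfl hinv₂
      rw [e1, e2, e3]

lemma aux_lift_plus {m : ℕ} (f : Fin m → ℂ) :
    (∏ i : Fin m, (1 + RatFunc.C (f i) * RatFunc.X))
      = algebraMap (Polynomial ℂ) (RatFunc ℂ)
          (∏ i : Fin m, (1 + Polynomial.C (f i) * Polynomial.X)) := by
  rw [map_prod]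
  exact Finset.prod_congr rfl fun i _ => by
    rw [map_add, map_one, map_mul, RatFunc.algebraMap_C, RatFunc.algebraMap_X]

lemma aux_lift_minus {m : ℕ} (f : Fin m → ℂ) :
    (∏ i : Fin m, (1 - RatFunc.C (f i) * RatFunc.X))
      = algebraMap (Polynomial ℂ) (RatFunc ℂ)
          (∏ i : Fin m, (1 - Polynomial.C (f i) * Polynomial.X)) := by
  rw [map_prod]
  exact Finset.prod_congr rfl fun i _ => by
    rw [map_sub, map_one, map_mul, RatFunc.algebraMap_C, RatFunc.algebraMap_X]

lemma aux_prod_minus_ne_zero {m : ℕ} (f : Fin m → ℂ) :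
    (∏ i : Fin m, (1 - Polynomial.C (f i) * Polynomial.X)) ≠ 0 := by
  rw [Finset.prod_ne_zero_iff]
  intro i _ h0
  have := congrArg (Polynomial.eval 0) h0
  simp at this

/-- Every supersymmetric polynomial takes the same value on the two tuples
`(a, b)` and `(c, d)` iff the rational functions
`∏ (1 + a_i z) / ∏ (1 − b_j z)` and `∏ (1 + c_i z) / ∏ (1 − d_j z)` coincide. -/
theorem supersym_values_eq_iff_ratFunc_eq (r s : ℕ)
    (a c : Fin (r + 1) → ℂ) (b d : Fin (s + 1) → ℂ) :
    (∀ p : MvPolynomial (Fin (r + 1) ⊕ Fin (s + 1)) ℂ, IsSupersymmetric r s p →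
        MvPolynomial.eval (Sum.elim a b) p = MvPolynomial.eval (Sum.elim c d) p) ↔
      (∏ i : Fin (r + 1), (1 + RatFunc.C (a i) * RatFunc.X)) /
          (∏ j : Fin (s + 1), (1 - RatFunc.C (b j) * RatFunc.X)) =
        (∏ i : Fin (r + 1), (1 + RatFunc.C (c i) * RatFunc.X)) /
          (∏ j : Fin (s + 1), (1 - RatFunc.C (d j) * RatFunc.X)) := by
  classical
  set M : Multiset ℂ := Multiset.map a Finset.univ.val
      + Multiset.map (fun j => -(d j)) Finset.univ.val with hMdef
  set N : Multiset ℂ := Multiset.map c Finset.univ.val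
      + Multiset.map (fun j => -(b j)) Finset.univ.val with hNdef
  have hprod : ∀ (u : Fin (r + 1) → ℂ) (v : Fin (s + 1) → ℂ),
      ((Multiset.map u Finset.univ.val + Multiset.map (fun j => -(v j)) Finset.univ.val).map
          fun x => 1 + Polynomial.C x * Polynomial.X).prod
        = (∏ i : Fin (r + 1), (1 + Polynomial.C (u i) * Polynomial.X))
          * ∏ j : Fin (s + 1), (1 - Polynomial.C (v j) * Polynomial.X) := by
    intro u v
    rw [Multiset.map_add, Multiset.prod_add, Multiset.map_map, Multiset.map_map,
      ← Finset.prod_eq_multiset_prod, ← Finset.prod_eq_multiset_prod]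
    refine congrArg₂ (· * ·) (Finset.prod_congr rfl fun i _ => rfl)
      (Finset.prod_congr rfl fun j _ => ?_)
    show 1 + Polynomial.C (-(v j)) * Polynomial.X = 1 - Polynomial.C (v j) * Polynomial.X
    rw [map_neg]; ring
  have hmom : ∀ (u : Fin (r + 1) → ℂ) (v : Fin (s + 1) → ℂ) (k : ℕ),
      ((Multiset.map u Finset.univ.val + Multiset.map (fun j => -(v j)) Finset.univ.val).map
          (· ^ k)).sum
        = (∑ i : Fin (r + 1), u i ^ k) + (-1 : ℂ) ^ k * ∑ j : Fin (s + 1), v j ^ k := by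
    intro u v k
    rw [Multiset.map_add, Multiset.sum_add, Multiset.map_map, Multiset.map_map,
      ← Finset.sum_eq_multiset_sum, ← Finset.sum_eq_multiset_sum, Finset.mul_sum]
    refine congrArg₂ (· + ·) (Finset.sum_congr rfl fun i _ => rfl)
      (Finset.sum_congr rfl fun j _ => ?_)
    show (-(v j)) ^ k = (-1 : ℂ) ^ k * v j ^ k
    rw [neg_pow]
  constructor
  · intro h
    have hps : ∀ k : ℕ, (M.map (· ^ k)).sum = (N.map (· ^ k)).sum := by
      intro k
      have hk := h (powerSumSupersym r s k) (aux_powerSum_supersym r s k)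
      rw [aux_eval_powerSum, aux_eval_powerSum, pow_succ] at hk
      rw [hMdef, hNdef, hmom a d k, hmom c b k]
      linear_combination hk
    have hMN : M = N := aux_multiset_eq_of_psum_eq hps
    have hpoly : (∏ i : Fin (r + 1), (1 + Polynomial.C (a i) * Polynomial.X))
          * ∏ j : Fin (s + 1), (1 - Polynomial.C (d j) * Polynomial.X)
        = (∏ i : Fin (r + 1), (1 + Polynomial.C (c i) * Polynomial.X))
          * ∏ j : Fin (s + 1), (1 - Polynomial.C (b j) * Polynomial.X) := by
      rw [← hprod a d, ← hprod c b, ← hMdef, ← hNdef, hMN]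
    rw [aux_lift_plus a, aux_lift_plus c, aux_lift_minus b, aux_lift_minus d,
      div_eq_div_iff (RatFunc.algebraMap_ne_zero (aux_prod_minus_ne_zero b))
        (RatFunc.algebraMap_ne_zero (aux_prod_minus_ne_zero d)),
      ← map_mul, ← map_mul, hpoly]
  · intro h p hp
    rw [aux_lift_plus a, aux_lift_plus c, aux_lift_minus b, aux_lift_minus d,
      div_eq_div_iff (RatFunc.algebraMap_ne_zero (aux_prod_minus_ne_zero b))
        (RatFunc.algebraMap_ne_zero (aux_prod_minus_ne_zero d)),
      ← map_mul, ← map_mul] at h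
    have hpoly := RatFunc.algebraMap_injective ℂ h
    have hcard : Multiset.card M = Multiset.card N := by
      rw [hMdef, hNdef]
      simp [Multiset.card_add, Multiset.card_map]
    have hMN : M = N := by
      refine aux_multiset_eq_of_prod_eq hcard ?_
      rw [hMdef, hNdef, hprod a d, hprod c b]
      exact hpoly
    rw [hMdef, hNdef] at hMN
    exact aux_reach hp c d _ a b rfl hMN
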